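/- arXiv:2212.13562 — 3 statements merged into one kernel-verified Lean document; each statement's English description precedes it below -/
import Mathlib

section
/- Let Ω be a finite alphabet, P a finite probability space on Ω, and let a, b be distinct elements of Ω. Let α ∈ Ω^∞ be Schnorr P-random, and let β be the infinite sequence over Ω \ {b} obtained by replacing every occurrence of b in α by a. Then β is Schnorr Q-random, where Q is the finite probability space on Ω \ {b} given by Q(a) = P(a) + P(b) and Q(x) = P(x) for x ≠ a. -/
open MeasureTheory

namespace AR

variable {Ω : Type} [Fintype Ω] [DecidableEq Ω] [Primcodable Ω] [MeasurableSpace Ω]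

/-- The length-`n` prefix `α↾n` of an infinite sequence `α`. -/
def restrict (α : ℕ → Ω) (n : ℕ) : List Ω := List.ofFn (fun i : Fin n => α i)

/-- The open set `[S]^≺` generated by a set of strings `S`:
all infinite sequences having some prefix in `S`. -/
def cyl (S : Set (List Ω)) : Set (ℕ → Ω) := {α | ∃ n, restrict α n ∈ S}

/-- The `n`-th section `C_n` of a set `C ⊆ ℕ × Ω*`. -/
def sec (C : Set (ℕ × List Ω)) (n : ℕ) : Set (List Ω) := {σ | (n, σ) ∈ C}

/-- `S` is prefix-free: no string of `S` is a proper prefix of another string of `S`. -/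
def PrefixFree (S : Set (List Ω)) : Prop :=
  ∀ σ ∈ S, ∀ τ ∈ S, σ <+: τ → σ = τ

/-- `P` is a finite probability space on the alphabet `Ω`. -/
def IsFPS (P : Ω → ℝ) : Prop := (∀ a, 0 ≤ P a) ∧ ∑ a, P a = 1

/-- `μ` is the Bernoulli measure `λ_P` on `Ω^∞`: the measure of the cylinder
`[σ]^≺` is `P(σ(1)) ⋯ P(σ(n))`. -/
def IsBernoulli (P : Ω → ℝ) (μ : Measure (ℕ → Ω)) : Prop :=
  ∀ σ : List Ω, μ (cyl {σ}) = ENNReal.ofReal ((σ.map P).prod)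

/-- A Martin-Löf `P`-test (for the Bernoulli measure `μ = λ_P`): an r.e. subset `C`
of `ℕ⁺ × Ω*` with `μ [C_n]^≺ < 2⁻ⁿ` for all `n ≥ 1`. -/
def IsMLTest (μ : Measure (ℕ → Ω)) (C : Set (ℕ × List Ω)) : Prop :=
  REPred (· ∈ C) ∧ ∀ n : ℕ, 1 ≤ n → μ (cyl (sec C n)) < (2 ^ n)⁻¹

/-- A real is computable if some computable sequence of rationals converges to it
at rate `2⁻ᵏ`. -/
def IsComputableReal (x : ℝ) : Prop :=
  ∃ f : ℕ → ℚ, Computable f ∧ ∀ k : ℕ, |x - (f k : ℝ)| < ((2 : ℝ) ^ k)⁻¹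

/-- A Schnorr `P`-test: a Martin-Löf `P`-test whose measures `μ [C_n]^≺` are
uniformly computable in `n`. -/
def IsSchnorrTest (μ : Measure (ℕ → Ω)) (C : Set (ℕ × List Ω)) : Prop :=
  IsMLTest μ C ∧ ∃ f : ℕ → ℕ → ℚ, Computable₂ f ∧
    ∀ n : ℕ, 1 ≤ n → ∀ k : ℕ,
      |(μ (cyl (sec C n))).toReal - (f n k : ℝ)| < ((2 : ℝ) ^ k)⁻¹

/-- `α` is Martin-Löf `P`-random: it passes every Martin-Löf `P`-test. -/
def MLRandom (μ : Measure (ℕ → Ω)) (α : ℕ → Ω) : Prop :=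
  ∀ C : Set (ℕ × List Ω), IsMLTest μ C → ∃ n : ℕ, 1 ≤ n ∧ α ∉ cyl (sec C n)

/-- `α` is Schnorr `P`-random: it passes every Schnorr `P`-test. -/
def SchnorrRandom (μ : Measure (ℕ → Ω)) (α : ℕ → Ω) : Prop :=
  ∀ C : Set (ℕ × List Ω), IsSchnorrTest μ C → ∃ n : ℕ, 1 ≤ n ∧ α ∉ cyl (sec C n)


section Aux
set_option linter.unusedSectionVars false

open scoped ENNReal

variable {A : Type} [Fintype A] [DecidableEq A]

lemma restrict_length (α : ℕ → A) (n : ℕ) : (restrict α n).length = n := by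
  simp [restrict]

lemma restrict_eq_of_prefix {α : ℕ → A} {σ : List A} {N : ℕ}
    (h : σ <+: restrict α N) : restrict α σ.length = σ := by
  have hlen : σ.length ≤ N := by simpa [restrict] using h.length_le
  refine (List.ext_getElem (by simp [restrict]) ?_).symm
  intro i h1 h2
  have hiN : i < N := lt_of_lt_of_le h1 hlen
  have := h.getElem (i := i) h1
  simpa [restrict, List.getElem_ofFn] using this

lemma cyl_mono {S T : Set (List A)} (h : S ⊆ T) : cyl S ⊆ cyl T :=
  fun _ ⟨n, hn⟩ => ⟨n, h hn⟩

lemma cyl_biUnion (S : Set (List A)) : cyl S = ⋃ σ ∈ S, cyl {σ} := by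
  ext α
  constructor
  · rintro ⟨n, hn⟩
    exact Set.mem_biUnion hn ⟨n, rfl⟩
  · rintro h
    rcases Set.mem_iUnion₂.mp h with ⟨σ, hσ, n, hn⟩
    rcases hn with hn
    exact ⟨n, by rwa [Set.mem_singleton_iff.mp hn]⟩

lemma ofReal_list_prod {P : A → ℝ} (hP : ∀ x, 0 ≤ P x) (σ : List A) :
    ENNReal.ofReal ((σ.map P).prod) = ((σ.map fun x => ENNReal.ofReal (P x)).prod) := by
  induction σ with
  | nil => simp
  | cons y σ' ih => simp [ENNReal.ofReal_mul (hP y), ih]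

lemma bernoulli_cyl_singleton {P : A → ℝ} [MeasurableSpace A]
    {μ : MeasureTheory.Measure (ℕ → A)} (hP : ∀ x, 0 ≤ P x) (hμ : IsBernoulli P μ)
    (σ : List A) :
    μ (cyl {σ}) = ((σ.map fun x => ENNReal.ofReal (P x)).prod) := by
  rw [hμ σ, ofReal_list_prod hP]

lemma bernoulli_univ {P : A → ℝ} [MeasurableSpace A]
    {μ : MeasureTheory.Measure (ℕ → A)} (hμ : IsBernoulli P μ) :
    μ Set.univ = 1 := by
  have h : cyl ({[]} : Set (List A)) = Set.univ := by
    ext α; simp only [Set.mem_univ, iff_true]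
    exact ⟨0, by simp [restrict]⟩
  have := hμ []
  rw [h] at this
  simpa using this

/-- Key counting lemma: sum of weights of length-`N` extensions of `σ`. -/
lemma sum_prefix (p : A → ℝ≥0∞) (hp : ∑ x, p x = 1) :
    ∀ (N : ℕ) (σ : List A), σ.length ≤ N →
      ∑ g : Fin N → A, (if σ <+: List.ofFn g then ∏ i, p (g i) else 0)
        = (σ.map p).prod := by
  intro N
  induction N with
  | zero =>
    intro σ hσ
    have hσ' : σ = [] := List.length_eq_zero_iff.mp (Nat.le_zero.mp hσ)
    subst hσ'
    simp
  | succ N ih =>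
    intro σ hσ
    rw [← (Fin.consEquiv (fun _ : Fin (N+1) => A)).sum_comp
      (fun g => if σ <+: List.ofFn g then ∏ i, p (g i) else 0)]
    rw [Fintype.sum_prod_type]
    have hconsfn : ∀ (x : A) (h : Fin N → A),
        List.ofFn (Fin.consEquiv (fun _ => A) (x, h)) = x :: List.ofFn h := by
      intro x h
      rw [List.ofFn_succ]
      simp [Fin.consEquiv]
    have hconspr : ∀ (x : A) (h : Fin N → A),
        (∏ i, p ((Fin.consEquiv (fun _ => A) (x, h)) i)) = p x * ∏ i, p (h i) := by
      intro x h
      rw [Fin.prod_univ_succ]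
      simp [Fin.consEquiv]
    cases σ with
    | nil =>
      simp only [List.nil_prefix, if_true, List.map_nil, List.prod_nil]
      have hin : ∀ x : A, ∑ h : Fin N → A, ∏ i, p (h i) = 1 := by
        intro x
        have := ih [] (Nat.zero_le N)
        simpa [List.nil_prefix] using this
      calc ∑ x : A, ∑ h : Fin N → A, ∏ i, p ((Fin.consEquiv (fun _ => A) (x, h)) i)
          = ∑ x : A, ∑ h : Fin N → A, p x * ∏ i, p (h i) := by
            refine Finset.sum_congr rfl fun x _ => Finset.sum_congr rfl fun h _ => hconspr x h
        _ = ∑ x : A, p x * ∑ h : Fin N → A, ∏ i, p (h i) := by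
            refine Finset.sum_congr rfl fun x _ => ?_
            rw [← Finset.mul_sum]
        _ = ∑ x : A, p x := by
            refine Finset.sum_congr rfl fun x _ => by rw [hin x, mul_one]
        _ = 1 := hp
    | cons y σ' =>
      have hσ' : σ'.length ≤ N := by simpa using hσ
      have step1 : ∀ x : A,
          (∑ h : Fin N → A,
            (if y :: σ' <+: List.ofFn (Fin.consEquiv (fun _ => A) (x, h))
              then ∏ i, p ((Fin.consEquiv (fun _ => A) (x, h)) i) else 0))
          = (if y = x then p x * (σ'.map p).prod else 0) := by
        intro x
        have e1 : ∀ h : Fin N → A,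
            (if y :: σ' <+: List.ofFn (Fin.consEquiv (fun _ => A) (x, h))
              then ∏ i, p ((Fin.consEquiv (fun _ => A) (x, h)) i) else 0)
            = (if y = x then (if σ' <+: List.ofFn h then p x * ∏ i, p (h i) else 0) else 0) := by
          intro h
          simp only [hconsfn, hconspr, List.cons_prefix_cons, ite_and]
        rw [Finset.sum_congr rfl fun h _ => e1 h]
        by_cases hyx : y = x
        · simp only [hyx, if_true]
          calc ∑ h : Fin N → A, (if σ' <+: List.ofFn h then p x * ∏ i, p (h i) else 0)
              = p x * ∑ h : Fin N → A, (if σ' <+: List.ofFn h then ∏ i, p (h i) else 0) := by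
                rw [Finset.mul_sum]
                exact Finset.sum_congr rfl fun h _ => by rw [mul_ite, mul_zero]
            _ = p x * (σ'.map p).prod := by rw [ih σ' hσ']
        · simp [hyx]
      calc ∑ x : A, ∑ h : Fin N → A,
            (if y :: σ' <+: List.ofFn (Fin.consEquiv (fun _ => A) (x, h))
              then ∏ i, p ((Fin.consEquiv (fun _ => A) (x, h)) i) else 0)
          = ∑ x : A, (if y = x then p x * (σ'.map p).prod else 0) :=
            Finset.sum_congr rfl fun x _ => step1 x
        _ = p y * (σ'.map p).prod := by
            rw [Finset.sum_ite_eq]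
            simp
        _ = ((y :: σ').map p).prod := by simp

lemma prefix_ite_sum {F : Finset (List A)} (hF : PrefixFree (↑F : Set (List A)))
    (τ : List A) (c : ℝ≥0∞) :
    (if ∃ σ ∈ F, σ <+: τ then c else 0) = ∑ σ ∈ F, (if σ <+: τ then c else 0) := by
  classical
  by_cases h : ∃ σ ∈ F, σ <+: τ
  · obtain ⟨σ0, hσ0, hpre⟩ := h
    rw [if_pos ⟨σ0, hσ0, hpre⟩, (Finset.sum_eq_single_of_mem σ0 hσ0 ?_), if_pos hpre]
    intro σ hσ hne
    rw [if_neg]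
    intro hp
    apply hne
    rcases le_total σ.length σ0.length with hl | hl
    · exact hF σ hσ σ0 hσ0 (List.prefix_of_prefix_length_le hp hpre hl)
    · exact (hF σ0 hσ0 σ hσ (List.prefix_of_prefix_length_le hpre hp hl)).symm
  · rw [if_neg h]
    refine (Finset.sum_eq_zero fun σ hσ => ?_).symm
    rw [if_neg]
    intro hp
    exact h ⟨σ, hσ, hp⟩

lemma finset_sum_le_measure_cyl {P : A → ℝ} [MeasurableSpace A]
    {μ : MeasureTheory.Measure (ℕ → A)} (hP : IsFPS P) (hμ : IsBernoulli P μ)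
    (F : Finset (List A)) (hF : PrefixFree (↑F : Set (List A))) :
    ∑ σ ∈ F, μ (cyl {σ}) ≤ μ (cyl (↑F : Set (List A))) := by
  classical
  set p : A → ℝ≥0∞ := fun x => ENNReal.ofReal (P x) with hpdef
  have hp1 : ∑ x, p x = 1 := by
    rw [hpdef]
    rw [← ENNReal.ofReal_sum_of_nonneg (fun x _ => hP.1 x), hP.2, ENNReal.ofReal_one]
  set N : ℕ := F.sup List.length with hNdef
  have hN : ∀ σ ∈ F, σ.length ≤ N := fun σ hσ => Finset.le_sup hσ
  set w : (Fin N → A) → ℝ≥0∞ := fun g => ∏ i, p (g i) with hwdef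
  have hcyl : ∀ g : Fin N → A, μ (cyl {List.ofFn g}) = w g := by
    intro g
    rw [bernoulli_cyl_singleton hP.1 hμ, List.map_ofFn, List.prod_ofFn]
    rfl
  set E : Finset (Fin N → A) := Finset.univ.filter (fun g => ∃ σ ∈ F, σ <+: List.ofFn g)
    with hEdef
  set Ec : Finset (Fin N → A) := Finset.univ.filter (fun g => ¬ ∃ σ ∈ F, σ <+: List.ofFn g)
    with hEcdef
  have hEsum : ∑ g ∈ E, w g = ∑ σ ∈ F, μ (cyl {σ}) := by
    rw [hEdef, Finset.sum_filter]
    calc ∑ g : Fin N → A, (if ∃ σ ∈ F, σ <+: List.ofFn g then w g else 0)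
        = ∑ g : Fin N → A, ∑ σ ∈ F, (if σ <+: List.ofFn g then w g else 0) :=
          Finset.sum_congr rfl fun g _ => prefix_ite_sum hF _ _
      _ = ∑ σ ∈ F, ∑ g : Fin N → A, (if σ <+: List.ofFn g then w g else 0) :=
          Finset.sum_comm
      _ = ∑ σ ∈ F, μ (cyl {σ}) := by
          refine Finset.sum_congr rfl fun σ hσ => ?_
          rw [sum_prefix p hp1 N σ (hN σ hσ), bernoulli_cyl_singleton hP.1 hμ]
  have hTot : ∑ g ∈ E, w g + ∑ g ∈ Ec, w g = 1 := by
    rw [hEdef, hEcdef, Finset.sum_filter_add_sum_filter_not]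
    have := sum_prefix p hp1 N [] (Nat.zero_le N)
    simpa [List.nil_prefix] using this
  have hB : μ (⋃ g ∈ Ec, cyl {List.ofFn g}) ≤ ∑ g ∈ Ec, w g := by
    refine le_trans (measure_biUnion_finset_le Ec _) ?_
    exact le_of_eq (Finset.sum_congr rfl fun g _ => hcyl g)
  have hcover : (Set.univ : Set (ℕ → A)) ⊆
      cyl (↑F : Set (List A)) ∪ ⋃ g ∈ Ec, cyl {List.ofFn g} := by
    intro α _
    by_cases hg : ∃ σ ∈ F, σ <+: List.ofFn (fun i : Fin N => α i)
    · left
      obtain ⟨σ, hσF, hpre⟩ := hg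
      have : restrict α σ.length = σ := restrict_eq_of_prefix (σ := σ) (N := N) hpre
      exact ⟨σ.length, by rw [this]; exact hσF⟩
    · right
      have hgmem : (fun i : Fin N => α i) ∈ Ec := by
        rw [hEcdef, Finset.mem_filter]
        exact ⟨Finset.mem_univ _, hg⟩
      exact Set.mem_biUnion hgmem ⟨N, rfl⟩
  have h1 : (1 : ℝ≥0∞) ≤ μ (cyl (↑F : Set (List A))) + ∑ g ∈ Ec, w g := by
    calc (1 : ℝ≥0∞) = μ Set.univ := (bernoulli_univ hμ).symm
      _ ≤ μ (cyl (↑F : Set (List A)) ∪ ⋃ g ∈ Ec, cyl {List.ofFn g}) :=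
          MeasureTheory.measure_mono hcover
      _ ≤ μ (cyl (↑F : Set (List A))) + μ (⋃ g ∈ Ec, cyl {List.ofFn g}) :=
          MeasureTheory.measure_union_le _ _
      _ ≤ _ := add_le_add_right hB _
  have hfin : ∑ g ∈ Ec, w g ≠ ⊤ := by
    intro htop
    rw [htop] at hTot
    simp at hTot
  have hE1 : ∑ g ∈ E, w g = 1 - ∑ g ∈ Ec, w g := ENNReal.eq_sub_of_add_eq hfin hTot
  rw [← hEsum, hE1]
  exact tsub_le_iff_right.mpr h1

lemma measure_cyl_prefixFree {P : A → ℝ} [MeasurableSpace A]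
    {μ : MeasureTheory.Measure (ℕ → A)} (hP : IsFPS P) (hμ : IsBernoulli P μ)
    {S : Set (List A)} (hS : PrefixFree S) :
    μ (cyl S) = ∑' σ : S, μ (cyl {(σ : List A)}) := by
  refine le_antisymm ?_ ?_
  · rw [cyl_biUnion]
    exact measure_biUnion_le μ (S.to_countable) _
  · rw [ENNReal.tsum_eq_iSup_sum]
    refine iSup_le fun Fs => ?_
    classical
    set F : Finset (List A) := Fs.image Subtype.val with hFdef
    have hsum : ∑ x ∈ Fs, μ (cyl {(x : List A)}) = ∑ σ ∈ F, μ (cyl {σ}) := by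
      rw [hFdef, Finset.sum_image (fun x _ y _ h => Subtype.ext h)]
    have hFS : (↑F : Set (List A)) ⊆ S := by
      rw [hFdef]
      intro σ hσ
      simp only [Finset.coe_image, Set.mem_image] at hσ
      obtain ⟨x, _, rfl⟩ := hσ
      exact x.2
    have hFpf : PrefixFree (↑F : Set (List A)) :=
      fun σ hσ τ hτ h => hS σ (hFS hσ) τ (hFS hτ) h
    calc ∑ x ∈ Fs, μ (cyl {(x : List A)}) = ∑ σ ∈ F, μ (cyl {σ}) := hsum
      _ ≤ μ (cyl (↑F : Set (List A))) := finset_sum_le_measure_cyl hP hμ F hFpf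
      _ ≤ μ (cyl S) := MeasureTheory.measure_mono (cyl_mono hFS)

/-- The set of minimal strings of `S`. -/
def minS (S : Set (List A)) : Set (List A) :=
  {σ | σ ∈ S ∧ ∀ τ, τ <+: σ → τ ∈ S → τ = σ}

lemma minS_subset (S : Set (List A)) : minS S ⊆ S := fun _ h => h.1

lemma minS_prefixFree (S : Set (List A)) : PrefixFree (minS S) :=
  fun σ hσ τ hτ h => hτ.2 σ h hσ.1

lemma cyl_minS (S : Set (List A)) : cyl (minS S) = cyl S := by
  refine le_antisymm (cyl_mono (minS_subset S)) ?_
  rintro α ⟨n, hn⟩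
  classical
  have hex : ∃ m, restrict α m ∈ S := ⟨n, hn⟩
  refine ⟨Nat.find hex, Nat.find_spec hex, ?_⟩
  intro τ hpre hτS
  have hτ : restrict α τ.length = τ := restrict_eq_of_prefix hpre
  have h1 : τ.length ≤ Nat.find hex := by
    simpa [restrict_length] using hpre.length_le
  have h2 : Nat.find hex ≤ τ.length := Nat.find_min' hex (by rw [hτ]; exact hτS)
  rw [← hτ]
  congr 1
  omega

end Aux


instance {Ω : Type} [Primcodable Ω] [DecidableEq Ω] (b : Ω) :
    Primcodable {x : Ω // x ≠ b} :=
  Primcodable.subtype (PrimrecPred.not (Primrec.eq.comp Primrec.id (Primrec.const b)))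


section Contr

set_option linter.unusedSectionVars false
open scoped ENNReal

variable {Ω : Type} [Fintype Ω] [DecidableEq Ω] (a b : Ω) (hab : a ≠ b)

/-- The contraction map sending `b` to `a` and fixing everything else. -/
def contr : Ω → {x : Ω // x ≠ b} := fun x => if h : x = b then ⟨a, hab⟩ else ⟨x, h⟩

lemma contr_val (x : Ω) : (contr a b hab x : Ω) = if x = b then a else x := by
  unfold contr
  split <;> simp_all

lemma contr_point_sum (P : Ω → ℝ) (hP : ∀ x, 0 ≤ P x) (Q : {x : Ω // x ≠ b} → ℝ)
    (hQdef : ∀ x : {x : Ω // x ≠ b}, Q x = if (x : Ω) = a then P a + P b else P (x : Ω))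
    (y : {x : Ω // x ≠ b}) :
    ∑' x : {x : Ω // contr a b hab x = y}, ENNReal.ofReal (P x.val) = ENNReal.ofReal (Q y) := by
  classical
  rw [tsum_fintype,
    ← Finset.sum_subtype (Finset.univ.filter (fun x => contr a b hab x = y))
      (fun x => by simp) (fun x => ENNReal.ofReal (P x))]
  by_cases hya : (y : Ω) = a
  · have hfil : Finset.univ.filter (fun x => contr a b hab x = y) = {a, b} := by
      ext x
      simp only [Finset.mem_filter, Finset.mem_univ, true_and, Finset.mem_insert,
        Finset.mem_singleton]
      constructor
      · intro h
        by_cases hxb : x = b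
        · exact Or.inr hxb
        · left
          have : (contr a b hab x : Ω) = x := by rw [contr_val, if_neg hxb]
          rw [← this, h, hya]
      · rintro (rfl | rfl)
        · exact Subtype.ext (by rw [contr_val, if_neg hab, hya])
        · exact Subtype.ext (by rw [contr_val, if_pos rfl, hya])
    rw [hfil, Finset.sum_pair hab, hQdef y, if_pos hya,
      ENNReal.ofReal_add (hP a) (hP b)]
  · have hfil : Finset.univ.filter (fun x => contr a b hab x = y) = {(y : Ω)} := by
      ext x
      simp only [Finset.mem_filter, Finset.mem_univ, true_and, Finset.mem_singleton]
      constructor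
      · intro h
        by_cases hxb : x = b
        · exfalso
          apply hya
          rw [← h, contr_val, if_pos hxb]
        · rw [← h, contr_val, if_neg hxb]
      · rintro rfl
        exact Subtype.ext (by rw [contr_val, if_neg y.prop])
    rw [hfil, Finset.sum_singleton, hQdef y, if_neg hya]

lemma contr_fiber_tsum (P : Ω → ℝ) (hP : ∀ x, 0 ≤ P x) (Q : {x : Ω // x ≠ b} → ℝ)
    (hQdef : ∀ x : {x : Ω // x ≠ b}, Q x = if (x : Ω) = a then P a + P b else P (x : Ω)) :
    ∀ τ : List {x : Ω // x ≠ b},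
      ∑' σ : {σ : List Ω // σ.map (contr a b hab) = τ},
        ((σ.val.map fun x => ENNReal.ofReal (P x)).prod)
      = ((τ.map fun y => ENNReal.ofReal (Q y)).prod) := by
  intro τ
  induction τ with
  | nil =>
    rw [tsum_eq_single (⟨[], by simp⟩ : {σ : List Ω // σ.map (contr a b hab) = []})]
    · simp
    · intro σ' hne
      exact absurd (Subtype.ext (List.map_eq_nil_iff.mp σ'.prop)) hne
  | cons y τ' ih =>
    set φ := contr a b hab with hφ
    let j : {x : Ω // φ x = y} × {σ : List Ω // σ.map φ = τ'} →
        {σ : List Ω // σ.map φ = y :: τ'} :=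
      fun z => ⟨z.1.val :: z.2.val, by simp [z.1.prop, z.2.prop]⟩
    have hj : Function.Bijective j := by
      constructor
      · rintro ⟨⟨x1, h1⟩, ⟨s1, h1'⟩⟩ ⟨⟨x2, h2⟩, ⟨s2, h2'⟩⟩ h
        simp only [j, Subtype.mk.injEq, List.cons.injEq] at h
        simp [Prod.ext_iff, Subtype.ext_iff, h.1, h.2]
      · rintro ⟨σ, hσ⟩
        cases σ with
        | nil => simp at hσ
        | cons x σ' =>
          simp only [List.map_cons, List.cons.injEq] at hσ
          exact ⟨⟨⟨x, hσ.1⟩, ⟨σ', hσ.2⟩⟩, rfl⟩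
    have he := (Equiv.ofBijective j hj).tsum_eq
      (fun σ : {σ : List Ω // σ.map φ = y :: τ'} =>
        ((σ.val.map fun x => ENNReal.ofReal (P x)).prod))
    rw [← he]
    have hval : ∀ z : {x : Ω // φ x = y} × {σ : List Ω // σ.map φ = τ'},
        (((Equiv.ofBijective j hj) z).val.map fun x => ENNReal.ofReal (P x)).prod
        = ENNReal.ofReal (P z.1.val) *
          ((z.2.val.map fun x => ENNReal.ofReal (P x)).prod) := by
      intro z
      simp [Equiv.ofBijective, j]
    rw [tsum_congr hval, ENNReal.tsum_prod (f := fun (x : {x : Ω // φ x = y})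
      (s : {σ : List Ω // σ.map φ = τ'}) => ENNReal.ofReal (P x.val) *
        ((s.val.map fun w => ENNReal.ofReal (P w)).prod))]
    calc ∑' (x : {x : Ω // φ x = y}) (s : {σ : List Ω // σ.map φ = τ'}),
          ENNReal.ofReal (P x.val) * ((s.val.map fun x => ENNReal.ofReal (P x)).prod)
        = ∑' x : {x : Ω // φ x = y}, ENNReal.ofReal (P x.val) *
            ∑' s : {σ : List Ω // σ.map φ = τ'},
              ((s.val.map fun x => ENNReal.ofReal (P x)).prod) := by
          exact tsum_congr fun x => ENNReal.tsum_mul_left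
      _ = (∑' x : {x : Ω // φ x = y}, ENNReal.ofReal (P x.val)) *
            ∑' s : {σ : List Ω // σ.map φ = τ'},
              ((s.val.map fun x => ENNReal.ofReal (P x)).prod) := ENNReal.tsum_mul_right
      _ = ENNReal.ofReal (Q y) * ((τ'.map fun y => ENNReal.ofReal (Q y)).prod) := by
          rw [contr_point_sum a b hab P hP Q hQdef y, ih]
      _ = (((y :: τ').map fun y => ENNReal.ofReal (Q y)).prod) := by simp

lemma contr_transfer [MeasurableSpace Ω]
    (P : Ω → ℝ) (hP : IsFPS P) (μ : MeasureTheory.Measure (ℕ → Ω)) (hμ : IsBernoulli P μ)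
    (Q : {x : Ω // x ≠ b} → ℝ) (hQ : IsFPS Q)
    (hQdef : ∀ x : {x : Ω // x ≠ b}, Q x = if (x : Ω) = a then P a + P b else P (x : Ω))
    (ν : MeasureTheory.Measure (ℕ → {x : Ω // x ≠ b})) (hν : IsBernoulli Q ν)
    (S : Set (List {x : Ω // x ≠ b})) :
    μ (cyl {σ : List Ω | σ.map (contr a b hab) ∈ S}) = ν (cyl S) := by
  classical
  set φ := contr a b hab with hφ
  have key : ∀ (α : ℕ → Ω) (n : ℕ), (restrict α n).map φ = restrict (fun i => φ (α i)) n := by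
    intro α n
    rw [restrict, restrict, List.map_ofFn]
    rfl
  have hpreim : ∀ T : Set (List {x : Ω // x ≠ b}),
      cyl {σ : List Ω | σ.map φ ∈ T} = (fun α : ℕ → Ω => fun i => φ (α i)) ⁻¹' cyl T := by
    intro T
    ext α
    simp only [cyl, Set.mem_setOf_eq, Set.mem_preimage]
    constructor
    · rintro ⟨n, hn⟩
      exact ⟨n, by rw [← key]; exact hn⟩
    · rintro ⟨n, hn⟩
      exact ⟨n, by rw [key]; exact hn⟩
  set M : Set (List {x : Ω // x ≠ b}) := minS S with hM
  have hMpf : PrefixFree M := minS_prefixFree S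
  have hhatpf : PrefixFree {σ : List Ω | σ.map φ ∈ M} := by
    intro σ hσ τ hτ hpre
    have h1 := hMpf _ hσ _ hτ (hpre.map φ)
    refine hpre.eq_of_length ?_
    have := congrArg List.length h1
    simpa using this
  have hcylM : cyl {σ : List Ω | σ.map φ ∈ S} = cyl {σ : List Ω | σ.map φ ∈ M} := by
    rw [hpreim S, hpreim M, hM, cyl_minS]
  rw [hcylM, measure_cyl_prefixFree hP hμ hhatpf]
  -- regroup the sum along fibers
  let E : {σ : List Ω // σ.map φ ∈ M} ≃
      Σ τ : {τ : List {x : Ω // x ≠ b} // τ ∈ M}, {σ : List Ω // σ.map φ = τ.val} :=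
    { toFun := fun σ => ⟨⟨σ.val.map φ, σ.prop⟩, ⟨σ.val, rfl⟩⟩
      invFun := fun x =>
        ⟨x.2.val, by rw [show x.2.val.map φ = x.1.val from x.2.prop]; exact x.1.prop⟩
      left_inv := fun σ => rfl
      right_inv := fun x => by
        refine Sigma.ext (Subtype.ext x.2.prop) ?_
        refine (Subtype.heq_iff_coe_eq ?_).mpr rfl
        intro σ'
        dsimp only
        rw [show x.2.val.map φ = x.1.val from x.2.prop] }
  have he := E.tsum_eq
    (fun x : Σ τ : {τ : List {x : Ω // x ≠ b} // τ ∈ M}, {σ : List Ω // σ.map φ = τ.val} =>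
      μ (cyl {x.2.val}))
  calc ∑' σ : {σ : List Ω | σ.map φ ∈ M}, μ (cyl {(σ : List Ω)})
      = ∑' x : Σ τ : {τ : List {x : Ω // x ≠ b} // τ ∈ M}, {σ : List Ω // σ.map φ = τ.val},
          μ (cyl {x.2.val}) := he
    _ = ∑' (τ : {τ : List {x : Ω // x ≠ b} // τ ∈ M}) (σ : {σ : List Ω // σ.map φ = τ.val}),
          μ (cyl {σ.val}) :=
        ENNReal.tsum_sigma (β := fun τ : {τ : List {x : Ω // x ≠ b} // τ ∈ M} =>
          {σ : List Ω // σ.map φ = τ.val}) (fun τ σ => μ (cyl {σ.val}))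
    _ = ∑' τ : {τ : List {x : Ω // x ≠ b} // τ ∈ M}, ν (cyl {τ.val}) := by
        refine tsum_congr fun τ => ?_
        calc ∑' σ : {σ : List Ω // σ.map φ = τ.val}, μ (cyl {σ.val})
            = ∑' σ : {σ : List Ω // σ.map φ = τ.val},
                ((σ.val.map fun x => ENNReal.ofReal (P x)).prod) :=
              tsum_congr fun σ => bernoulli_cyl_singleton hP.1 hμ _
          _ = ((τ.val.map fun y => ENNReal.ofReal (Q y)).prod) :=
              contr_fiber_tsum a b hab P hP.1 Q hQdef τ.val
          _ = ν (cyl {τ.val}) := (bernoulli_cyl_singleton hQ.1 hν _).symm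
    _ = ν (cyl M) := (measure_cyl_prefixFree hQ hν hMpf).symm
    _ = ν (cyl S) := by rw [hM, cyl_minS]

lemma contr_primrec [Primcodable Ω] : Primrec (contr a b hab) := by
  have h : contr a b hab = fun x =>
      (⟨if x = b then a else x, by
        intro hc
        by_cases hxb : x = b
        · rw [if_pos hxb] at hc; exact hab hc
        · rw [if_neg hxb] at hc; exact hxb hc⟩ : {x : Ω // x ≠ b}) := by
    funext x
    exact Subtype.ext (by rw [contr_val])
  rw [h]
  exact Primrec.subtype_mk
    (Primrec.ite (Primrec.eq.comp Primrec.id (Primrec.const b)) (Primrec.const a) Primrec.id)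

end Contr


/-- replacing every occurrence of `b` by `a` in a Schnorr `P`-random
sequence yields a Schnorr `Q`-random sequence over `Ω \ {b}`, where
`Q a = P a + P b` and `Q x = P x` otherwise. -/
theorem schnorr_random_contraction {Ω : Type} [Fintype Ω] [Nonempty Ω]
    [DecidableEq Ω] [Primcodable Ω] [MeasurableSpace Ω]
    (P : Ω → ℝ) (μ : Measure (ℕ → Ω)) (hP : IsFPS P) (hμ : IsBernoulli P μ)
    (α : ℕ → Ω) (hα : SchnorrRandom μ α) (a b : Ω) (hab : a ≠ b)
    (Q : {x : Ω // x ≠ b} → ℝ) (hQ : IsFPS Q)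
    (hQdef : ∀ x : {x : Ω // x ≠ b}, Q x = if (x : Ω) = a then P a + P b else P (x : Ω))
    (ν : Measure (ℕ → {x : Ω // x ≠ b})) (hν : IsBernoulli Q ν)
    (β : ℕ → {x : Ω // x ≠ b})
    (hβ : ∀ i : ℕ, (β i : Ω) = if α i = b then a else α i) :
    SchnorrRandom ν β := by
  intro C hC
  classical
  set φ := contr a b hab with hφdef
  set D : Set (ℕ × List Ω) := {x | (x.1, x.2.map φ) ∈ C} with hDdef
  have hsec : ∀ n, μ (cyl (sec D n)) = ν (cyl (sec C n)) := by
    intro n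
    have hseceq : sec D n = {σ : List Ω | σ.map φ ∈ sec C n} := rfl
    rw [hseceq]
    exact contr_transfer a b hab P hP μ hμ Q hQ hQdef ν hν (sec C n)
  obtain ⟨⟨hCre, hCbound⟩, f, hf, hfbound⟩ := hC
  have hφpr : Primrec φ := contr_primrec a b hab
  have hmap : Computable fun x : ℕ × List Ω => (x.1, x.2.map φ) :=
    Primrec.to_comp (Primrec.fst.pair (Primrec.list_map Primrec.snd
      ((hφpr.comp Primrec.snd).to₂)))
  have hDre : REPred (· ∈ D) := Partrec.comp hCre hmap
  have hD_schnorr : IsSchnorrTest μ D := by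
    refine ⟨⟨hDre, fun n hn => ?_⟩, f, hf, fun n hn k => ?_⟩
    · rw [hsec n]; exact hCbound n hn
    · rw [hsec n]; exact hfbound n hn k
  obtain ⟨n, hn, hnot⟩ := hα D hD_schnorr
  refine ⟨n, hn, fun hmem => hnot ?_⟩
  obtain ⟨m, hm⟩ := hmem
  have hβφ : ∀ i, φ (α i) = β i := fun i =>
    (Subtype.ext ((contr_val a b hab (α i)).trans (hβ i).symm))
  have hrmap : (restrict α m).map φ = restrict β m := by
    rw [restrict, restrict, List.map_ofFn]
    exact congrArg List.ofFn (funext fun i => hβφ i)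
  refine ⟨m, ?_⟩
  show (n, (restrict α m).map φ) ∈ C
  rw [hrmap]
  exact hm


end AR
end

section
/- Let ε be a positive rational and L a positive integer, and define f(n) = ⌈n^{2+ε}⌉. Then there exists a total recursive function g : ℕ⁺ → ℕ⁺ such that for every m ≥ 1: g(m) ≥ L and ∑_{n=g(m)}^∞ ∑_{k=f(n)}^∞ exp(−k/n²) < 2^{−m−1}. -/
open Real Filter Topology

private def natIciEquiv (f : ℕ) : ℕ ≃ {k : ℕ // f ≤ k} where
  toFun j := ⟨f + j, Nat.le_add_right _ _⟩
  invFun k := k.1 - f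
  left_inv j := by simp
  right_inv k := Subtype.ext (Nat.add_sub_cancel' k.2)

private lemma inner_eq (f n : ℕ) (hn : 1 ≤ n) :
    (∑' k : {k : ℕ // f ≤ k}, Real.exp (-(k.1 : ℝ) / (n : ℝ) ^ 2))
      = Real.exp (-(1 : ℝ) / (n : ℝ) ^ 2) ^ f
        * (1 - Real.exp (-(1 : ℝ) / (n : ℝ) ^ 2))⁻¹ := by
  have hn0 : (0:ℝ) < (n:ℝ)^2 := by positivity
  set x : ℝ := -(1:ℝ) / (n:ℝ)^2 with hx
  have hxneg : x < 0 := by rw [hx]; exact div_neg_of_neg_of_pos (by norm_num) hn0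
  have hr0 : (0:ℝ) ≤ Real.exp x := (Real.exp_pos x).le
  have hr1 : Real.exp x < 1 := Real.exp_lt_one_iff.mpr hxneg
  have key : ∀ k : ℕ, Real.exp (-(k : ℝ) / (n : ℝ) ^ 2) = Real.exp x ^ k := by
    intro k
    rw [← Real.exp_nat_mul]
    congr 1
    rw [hx]; ring
  rw [← (natIciEquiv f).tsum_eq]
  have : ∀ j : ℕ, Real.exp (-((((natIciEquiv f) j).1 : ℕ) : ℝ) / (n : ℝ) ^ 2)
      = Real.exp x ^ f * Real.exp x ^ j := by
    intro j
    have : (((natIciEquiv f) j).1 : ℕ) = f + j := rfl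
    rw [this, key (f + j), pow_add]
  rw [tsum_congr this, tsum_mul_left, tsum_geometric_of_lt_one hr0 hr1]

private lemma exp_inv_le : (3:ℝ)⁻¹ ≤ Real.exp (-1) := by
  rw [Real.exp_neg]
  exact inv_anti₀ (Real.exp_pos 1)
    (le_of_lt (lt_trans Real.exp_one_lt_d9 (by norm_num)))

/-- bound on the inner sum: `t n ≤ 3 n^2 exp(-n^ε)` -/
private lemma inner_le (ε' : ℝ) (hε : 0 < ε') (n : ℕ) (hn : 1 ≤ n) :
    (∑' k : {k : ℕ // ⌈((n : ℝ)) ^ (2 + ε')⌉₊ ≤ k}, Real.exp (-(k.1 : ℝ) / (n : ℝ) ^ 2))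
      ≤ 3 * (n:ℝ)^2 * Real.exp (-(n:ℝ) ^ ε') := by
  have hn0 : (0:ℝ) < (n:ℝ) := by exact_mod_cast hn
  have hn2 : (0:ℝ) < (n:ℝ)^2 := by positivity
  rw [inner_eq _ n hn]
  set f := ⌈((n : ℝ)) ^ (2 + ε')⌉₊ with hf
  set x : ℝ := (1:ℝ) / (n:ℝ)^2 with hx
  have hx0 : 0 < x := by positivity
  have hx1 : x ≤ 1 := by
    rw [hx, div_le_one hn2]
    have : (1:ℝ) ≤ (n:ℝ) := by exact_mod_cast hn
    nlinarith
  have hexpand : -(1:ℝ) / (n:ℝ)^2 = -x := by rw [hx]; ring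
  rw [hexpand]
  -- first factor
  have h1 : Real.exp (-x) ^ f ≤ Real.exp (-(n:ℝ) ^ ε') := by
    rw [← Real.exp_nat_mul, Real.exp_le_exp]
    have hfle : (n:ℝ) ^ (2 + ε') ≤ (f : ℝ) := Nat.le_ceil _
    have hsplit : (n:ℝ) ^ (2 + ε') = (n:ℝ)^2 * (n:ℝ) ^ ε' := by
      rw [Real.rpow_add hn0, Real.rpow_two]
    have hle : (n:ℝ)^2 * (n:ℝ) ^ ε' ≤ (f:ℝ) := hsplit ▸ hfle
    have h2 : (n:ℝ) ^ ε' ≤ (f:ℝ) / (n:ℝ)^2 := by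
      rw [le_div_iff₀ hn2]; nlinarith
    calc (f:ℝ) * -x = -((f:ℝ) / (n:ℝ)^2) := by rw [hx]; ring
      _ ≤ -(n:ℝ) ^ ε' := neg_le_neg h2
  -- second factor : (1 - exp(-x))⁻¹ ≤ 3 n^2
  have h2 : (1 - Real.exp (-x))⁻¹ ≤ 3 * (n:ℝ)^2 := by
    have hlow : x / 3 ≤ 1 - Real.exp (-x) := by
      have hxe : x * Real.exp (-x) ≤ 1 - Real.exp (-x) := by
        have hprod : Real.exp x * Real.exp (-x) = 1 := by
          rw [← Real.exp_add]; simp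
        have hmul := mul_le_mul_of_nonneg_right (Real.add_one_le_exp x)
          (Real.exp_pos (-x)).le
        nlinarith [hmul, hprod]
      have hee : (3:ℝ)⁻¹ ≤ Real.exp (-x) := by
        calc (3:ℝ)⁻¹ ≤ Real.exp (-1) := exp_inv_le
          _ ≤ Real.exp (-x) := by rw [Real.exp_le_exp]; linarith
      nlinarith
    have hpos : 0 < 1 - Real.exp (-x) := lt_of_lt_of_le (by positivity) hlow
    rw [inv_le_comm₀ hpos (by positivity)]
    calc (3 * (n:ℝ)^2)⁻¹ = x / 3 := by rw [hx]; field_simp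
      _ ≤ _ := hlow
  have hA : (0:ℝ) ≤ Real.exp (-x) ^ f := by positivity
  have hB : (0:ℝ) < 1 - Real.exp (-x) := by
    have : Real.exp (-x) < 1 := Real.exp_lt_one_iff.mpr (by linarith)
    linarith
  calc Real.exp (-x) ^ f * (1 - Real.exp (-x))⁻¹
      ≤ Real.exp (-(n:ℝ) ^ ε') * (3 * (n:ℝ)^2) :=
        mul_le_mul h1 h2 (by positivity) (Real.exp_pos _).le
    _ = 3 * (n:ℝ)^2 * Real.exp (-(n:ℝ) ^ ε') := by ring

private lemma telescope_hasSum (N : ℕ) (hN : 1 ≤ N) :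
    HasSum (fun j : ℕ => (((N + j : ℕ) : ℝ) * ((N + j : ℕ) + 1))⁻¹) ((N : ℝ))⁻¹ := by
  have hpos : ∀ j : ℕ, (0:ℝ) < ((N + j : ℕ) : ℝ) := by
    intro j
    have : 1 ≤ N + j := le_trans hN (Nat.le_add_right _ _)
    exact_mod_cast this
  have hterm : ∀ j : ℕ, (((N + j : ℕ) : ℝ) * ((N + j : ℕ) + 1))⁻¹
      = ((N + j : ℕ) : ℝ)⁻¹ - (((N + (j+1) : ℕ)) : ℝ)⁻¹ := by
    intro j
    have h1 : (0:ℝ) < ((N + j : ℕ) : ℝ) := hpos j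
    have h2 : ((N + (j+1) : ℕ) : ℝ) = ((N + j : ℕ) : ℝ) + 1 := by push_cast; ring
    rw [h2]
    field_simp
    ring
  rw [hasSum_iff_tendsto_nat_of_nonneg (fun j => by positivity)]
  have hsum : ∀ J : ℕ, ∑ j ∈ Finset.range J, (((N + j : ℕ) : ℝ) * ((N + j : ℕ) + 1))⁻¹
      = ((N:ℝ))⁻¹ - ((N + J : ℕ) : ℝ)⁻¹ := by
    intro J
    rw [Finset.sum_congr rfl (fun j _ => hterm j)]
    rw [Finset.sum_range_sub' (fun j => ((N + j : ℕ) : ℝ)⁻¹) J]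
    simp
  simp only [hsum]
  have : Tendsto (fun J : ℕ => ((N + J : ℕ) : ℝ)⁻¹) atTop (𝓝 0) := by
    apply Tendsto.comp tendsto_inv_atTop_zero
    apply tendsto_natCast_atTop_atTop.comp
    exact tendsto_atTop_mono (fun J => Nat.le_add_left J N) tendsto_id
  have h0 : Tendsto (fun J : ℕ => ((N:ℝ))⁻¹ - ((N + J : ℕ) : ℝ)⁻¹) atTop
      (𝓝 (((N:ℝ))⁻¹ - 0)) := Tendsto.sub tendsto_const_nhds this
  simpa using h0

/-- eventually `3 n² exp(-n^ε) ≤ 1/(n(n+1))` -/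
private lemma exists_N0 (ε' : ℝ) (hε : 0 < ε') :
    ∃ N0 : ℕ, ∀ n : ℕ, N0 ≤ n →
      3 * (n:ℝ)^2 * Real.exp (-(n:ℝ) ^ ε') ≤ ((n:ℝ) * ((n:ℝ) + 1))⁻¹ := by
  have htend : Tendsto (fun n : ℕ => ((n:ℝ)) ^ (ε'/2)) atTop atTop :=
    (tendsto_rpow_atTop (by linarith)).comp tendsto_natCast_atTop_atTop
  obtain ⟨N1, hN1⟩ := (htend.eventually_ge_atTop (10 / ε')).exists_forall_of_atTop
  refine ⟨max N1 6, fun n hn => ?_⟩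
  have hn6 : (6:ℕ) ≤ n := le_trans (le_max_right _ _) hn
  have hn6' : (6:ℝ) ≤ (n:ℝ) := by exact_mod_cast hn6
  have hn0 : (0:ℝ) < (n:ℝ) := by linarith
  have hkey : (10 / ε') ≤ (n:ℝ) ^ (ε'/2) := hN1 n (le_trans (le_max_left _ _) hn)
  -- log bound : log (6 * n^4) ≤ n ^ ε'
  have hlog : Real.log (6 * (n:ℝ)^4) ≤ (n:ℝ) ^ ε' := by
    have h1 : Real.log (6 * (n:ℝ)^4) = Real.log 6 + 4 * Real.log (n:ℝ) := by
      rw [Real.log_mul (by norm_num) (by positivity), Real.log_pow]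
      push_cast; ring
    have h2 : Real.log 6 ≤ Real.log (n:ℝ) := Real.log_le_log (by norm_num) hn6'
    have h3 : Real.log (n:ℝ) ≤ (n:ℝ) ^ (ε'/2) / (ε'/2) :=
      Real.log_le_rpow_div hn0.le (by linarith)
    have h4 : (5:ℝ) * ((n:ℝ) ^ (ε'/2) / (ε'/2)) ≤ (n:ℝ) ^ (ε'/2) * (n:ℝ) ^ (ε'/2) := by
      have hp : (0:ℝ) < (n:ℝ) ^ (ε'/2) := Real.rpow_pos_of_pos hn0 _
      have : (5:ℝ) * ((n:ℝ) ^ (ε'/2) / (ε'/2)) = (10 / ε') * (n:ℝ) ^ (ε'/2) := by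
        field_simp; ring
      rw [this]
      exact mul_le_mul_of_nonneg_right hkey hp.le
    have h5 : (n:ℝ) ^ (ε'/2) * (n:ℝ) ^ (ε'/2) = (n:ℝ) ^ ε' := by
      rw [← Real.rpow_add hn0]; ring_nf
    have h6 : (0:ℝ) ≤ Real.log (n:ℝ) := Real.log_nonneg (by linarith)
    have h3' : (5:ℝ) * Real.log (n:ℝ) ≤ 5 * ((n:ℝ) ^ (ε'/2) / (ε'/2)) := by linarith
    linarith
  have h6n : (0:ℝ) < 6 * (n:ℝ)^4 := by positivity
  have hexp : Real.exp (-(n:ℝ) ^ ε') ≤ (6 * (n:ℝ)^4)⁻¹ := by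
    have hle : 6 * (n:ℝ)^4 ≤ Real.exp ((n:ℝ) ^ ε') := by
      rw [← Real.exp_log h6n]
      exact Real.exp_le_exp.mpr hlog
    rw [Real.exp_neg]
    exact inv_anti₀ h6n hle
  calc 3 * (n:ℝ)^2 * Real.exp (-(n:ℝ) ^ ε')
      ≤ 3 * (n:ℝ)^2 * (6 * (n:ℝ)^4)⁻¹ :=
        mul_le_mul_of_nonneg_left hexp (by positivity)
    _ = (2 * (n:ℝ)^4)⁻¹ * (n:ℝ)^2 := by field_simp; ring
    _ ≤ ((n:ℝ) * ((n:ℝ) + 1))⁻¹ := by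
        rw [inv_mul_le_iff₀ (by positivity), ← div_le_iff₀ (by positivity),
          div_inv_eq_mul]
        nlinarith [hn6']


/-- a computable modulus for the tail of the double sum
`∑_{n≥g(m)} ∑_{k≥⌈n^{2+ε}⌉} exp(−k/n²)`, with `g(m) ≥ L`. -/
theorem computable_modulus_double_sum (ε : ℚ) (hε : 0 < ε) (L : ℕ) (hL : 1 ≤ L) :
    ∃ g : ℕ → ℕ, Computable g ∧ ∀ m : ℕ, 1 ≤ m → L ≤ g m ∧
      (∑' n : {n : ℕ // g m ≤ n}, ∑' k : {k : ℕ // ⌈((n.1 : ℝ)) ^ (2 + (ε : ℝ))⌉₊ ≤ k},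
          Real.exp (-(k.1 : ℝ) / (n.1 : ℝ) ^ 2))
        < ((2 : ℝ) ^ (m + 1))⁻¹ := by
  have hε' : (0:ℝ) < (ε : ℝ) := by exact_mod_cast hε
  obtain ⟨N0, hN0⟩ := exists_N0 (ε : ℝ) hε'
  set C : ℕ := max 1 N0 with hC
  refine ⟨fun m => max L (max C (2 ^ (m + 2))), ?_, ?_⟩
  · have hpow : Primrec₂ (· ^ · : ℕ → ℕ → ℕ) := Primrec₂.unpaired'.mp Nat.Primrec.pow
    have : Primrec (fun m : ℕ => max L (max C (2 ^ (m + 2)))) := by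
      apply Primrec.nat_max.comp (Primrec.const L)
      apply Primrec.nat_max.comp (Primrec.const C)
      exact hpow.comp (Primrec.const 2) (Primrec.succ.comp Primrec.succ)
    exact this.to_comp
  · intro m _
    refine ⟨le_max_left _ _, ?_⟩
    set N : ℕ := max L (max C (2 ^ (m + 2))) with hNdef
    have hN1 : 1 ≤ N := le_trans hL (le_max_left _ _)
    have hNC : C ≤ N := le_trans (le_max_left _ _) (le_max_right _ _)
    have hN2 : 2 ^ (m + 2) ≤ N := le_trans (le_max_right _ _) (le_max_right _ _)
    set T : ℕ → ℝ := fun n =>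
      ∑' k : {k : ℕ // ⌈((n : ℝ)) ^ (2 + (ε : ℝ))⌉₊ ≤ k},
        Real.exp (-(k.1 : ℝ) / (n : ℝ) ^ 2) with hT
    have hre : (∑' n : {n : ℕ // N ≤ n}, T n.1) = ∑' j : ℕ, T (N + j) :=
      ((natIciEquiv N).tsum_eq (fun n : {n : ℕ // N ≤ n} => T n.1)).symm.trans
        (tsum_congr fun j => rfl)
    have hTb : ∀ j : ℕ, T (N + j) ≤ (((N + j : ℕ) : ℝ) * ((N + j : ℕ) + 1))⁻¹ := by
      intro j
      have h1 : 1 ≤ N + j := le_trans hN1 (Nat.le_add_right _ _)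
      have h0 : N0 ≤ N + j :=
        le_trans (le_trans (le_max_right 1 N0) hNC) (Nat.le_add_right _ _)
      calc T (N + j) ≤ 3 * ((N + j : ℕ) : ℝ)^2 * Real.exp (-((N + j : ℕ) : ℝ) ^ (ε:ℝ)) :=
            inner_le (ε : ℝ) hε' (N + j) h1
        _ ≤ (((N + j : ℕ) : ℝ) * (((N + j : ℕ) : ℝ) + 1))⁻¹ := hN0 (N + j) h0
    have hNR : ((2:ℝ) ^ (m + 2)) ≤ (N : ℝ) := by exact_mod_cast hN2
    have hfin : ((N : ℝ))⁻¹ < ((2 : ℝ) ^ (m + 1))⁻¹ := by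
      have h1 : (2:ℝ) ^ (m + 1) < (2:ℝ) ^ (m + 2) :=
        pow_lt_pow_right₀ (by norm_num) (by omega)
      have h2 : (2:ℝ) ^ (m + 1) < (N : ℝ) := lt_of_lt_of_le h1 hNR
      exact inv_strictAnti₀ (by positivity) h2
    show (∑' n : {n : ℕ // N ≤ n}, T n.1) < ((2 : ℝ) ^ (m + 1))⁻¹
    rw [hre]
    by_cases hs : Summable (fun j : ℕ => T (N + j))
    · have hle := Summable.tsum_le_tsum hTb hs (telescope_hasSum N hN1).summable
      rw [(telescope_hasSum N hN1).tsum_eq] at hle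
      exact lt_of_le_of_lt hle hfin
    · rw [tsum_eq_zero_of_not_summable hs]
      positivity
end

section
/- Let X₁, X₂, … be i.i.d. random variables on a probability space (Ω, F, P) with a ≤ X₁ ≤ b almost surely for some reals a < b. Then almost surely there exists a primitive recursive function f : ℕ → ℕ such that for every n ≥ 1 and every k ≥ f(n), |(1/k)∑_{i=1}^k Xᵢ − E[X₁]| < 1/n. -/
open Finset

lemma primrec_aux (D M : ℕ) : Primrec fun n : ℕ => 16 * (n * D + M) ^ 4 := by
  have hpow : Primrec₂ ((· ^ ·) : ℕ → ℕ → ℕ) := Primrec₂.unpaired'.1 Nat.Primrec.pow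
  exact Primrec.nat_mul.comp (Primrec.const 16)
    (hpow.comp (Primrec.nat_add.comp (Primrec.nat_mul.comp Primrec.id (Primrec.const D))
      (Primrec.const M)) (Primrec.const 4))

lemma interp_aux (Y : ℕ → ℝ) (c : ℝ) (hc : 0 ≤ c) (hY : ∀ i, |Y i| ≤ c)
    (m k : ℕ) (hm : 1 ≤ m) (h1 : m ^ 4 ≤ k) (h2 : k < (m + 1) ^ 4) :
    |(1 / (k : ℝ)) * ∑ i ∈ Finset.range k, Y i -
      (1 / ((m ^ 4 : ℕ) : ℝ)) * ∑ i ∈ Finset.range (m ^ 4), Y i| ≤ 30 * c / m := by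
  set N := m ^ 4 with hN
  have hm0 : (0:ℝ) < m := by exact_mod_cast hm
  have hN1 : 1 ≤ N := Nat.one_le_pow _ _ hm
  have hN0 : (0:ℝ) < (N:ℝ) := by exact_mod_cast hN1
  have hk0 : (0:ℝ) < (k:ℝ) := lt_of_lt_of_le hN0 (by exact_mod_cast h1)
  have hNk : (N:ℝ) ≤ (k:ℝ) := by exact_mod_cast h1
  have hsplit : ∑ i ∈ Finset.range k, Y i
      = ∑ i ∈ Finset.range N, Y i + ∑ i ∈ Finset.Ico N k, Y i :=
    (Finset.sum_range_add_sum_Ico _ h1).symm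
  set A := ∑ i ∈ Finset.range N, Y i with hA
  set T := ∑ i ∈ Finset.Ico N k, Y i with hT
  set d : ℝ := (k:ℝ) - N with hd
  have hd0 : 0 ≤ d := by simp [hd]; linarith
  have hdcast : ((k - N : ℕ) : ℝ) = d := by
    rw [Nat.cast_sub h1]
  have hAbd : |A| ≤ (N:ℝ) * c := by
    calc |A| ≤ ∑ i ∈ Finset.range N, |Y i| := Finset.abs_sum_le_sum_abs _ _
    _ ≤ ∑ _i ∈ Finset.range N, c := Finset.sum_le_sum fun i _ => hY i
    _ = (N:ℝ) * c := by simp [mul_comm]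
  have hTbd : |T| ≤ d * c := by
    calc |T| ≤ ∑ i ∈ Finset.Ico N k, |Y i| := Finset.abs_sum_le_sum_abs _ _
    _ ≤ ∑ _i ∈ Finset.Ico N k, c := Finset.sum_le_sum fun i _ => hY i
    _ = ((k - N : ℕ):ℝ) * c := by simp [Nat.card_Ico, mul_comm]
    _ = d * c := by rw [hdcast]
  have hNr : (N:ℝ) = (m:ℝ) ^ 4 := by rw [hN]; push_cast; ring
  have hd15 : d ≤ 15 * (m:ℝ) ^ 3 := by
    have hkr : (k:ℝ) < ((m:ℝ) + 1) ^ 4 := by exact_mod_cast h2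
    have hm1r : (1:ℝ) ≤ (m:ℝ) := by exact_mod_cast hm
    simp only [hd, hNr]
    nlinarith [hm1r, hkr, sq_nonneg ((m:ℝ) - 1), sq_nonneg (m:ℝ)]
  have heq : (1 / (k:ℝ)) * (A + T) - (1 / (N:ℝ)) * A = T / k - A * d / (N * k) := by
    rw [hd]; field_simp; ring
  rw [hsplit, heq]
  calc |T / k - A * d / (N * k)| ≤ |T / k| + |A * d / (N * k)| := abs_sub _ _
  _ = |T| / k + |A| * d / (N * k) := by
      rw [abs_div, abs_div, abs_mul, abs_mul, abs_of_pos hk0, abs_of_pos hN0,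
        abs_of_nonneg hd0]
  _ ≤ (d * c) / N + ((N:ℝ) * c) * d / (N * N) := by gcongr
  _ = 2 * c * d / N := by field_simp; ring
  _ ≤ 2 * c * (15 * (m:ℝ) ^ 3) / (m:ℝ) ^ 4 := by rw [hNr]; gcongr
  _ = 30 * c / m := by field_simp; ring


open MeasureTheory ProbabilityTheory Filter

set_option maxHeartbeats 1000000 in
/-- almost surely there is a primitive recursive modulus of
convergence in the strong law of large numbers for bounded i.i.d. variables. -/
theorem slln_primitive_recursive_modulus {Ω : Type} [MeasurableSpace Ω]
    (P : Measure Ω) [IsProbabilityMeasure P] (X : ℕ → Ω → ℝ)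
    (hmeas : ∀ i, Measurable (X i))
    (hindep : iIndepFun X P)
    (hident : ∀ i, IdentDistrib (X i) (X 0) P P)
    (a b : ℝ) (hab : a < b)
    (hbdd : ∀ᵐ ω ∂P, a ≤ X 0 ω ∧ X 0 ω ≤ b) :
    ∀ᵐ ω ∂P, ∃ f : ℕ → ℕ, Primrec f ∧
      ∀ n : ℕ, 1 ≤ n → ∀ k : ℕ, 1 ≤ k → f n ≤ k →
        |(1 / (k : ℝ)) * ∑ i ∈ Finset.range k, X i ω - ∫ x, X 0 x ∂P|
          < 1 / (n : ℝ) := by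
  set μ := ∫ x, X 0 x ∂P with hμdef
  set c : ℝ := max |a| |b| with hcdef
  have hc0 : 0 ≤ c := le_trans (abs_nonneg a) (le_max_left _ _)
  have habs0 : ∀ᵐ ω ∂P, |X 0 ω| ≤ c := by
    filter_upwards [hbdd] with ω h
    exact abs_le_max_abs_abs h.1 h.2
  have habs : ∀ i, ∀ᵐ ω ∂P, |X i ω| ≤ c := fun i =>
    (hident i).symm.ae_snd (p := fun x => |x| ≤ c)
      ((isClosed_le continuous_abs continuous_const).measurableSet) habs0
  have hmem : ∀ i, MemLp (X i) 2 P := fun i =>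
    MemLp.of_bound (hmeas i).aestronglyMeasurable c
      ((habs i).mono fun ω h => by simpa [Real.norm_eq_abs] using h)
  set V := variance (X 0) P with hVdef
  have hV0 : 0 ≤ V := variance_nonneg _ _
  have hvar : ∀ N : ℕ, variance (∑ i ∈ Finset.range N, X i) P = N * V := by
    intro N
    rw [IndepFun.variance_sum (fun i _ => hmem i)
      (fun i _ j _ hij => hindep.indepFun hij)]
    rw [Finset.sum_congr rfl fun i _ => (hident i).variance_eq,
      Finset.sum_const, Finset.card_range, nsmul_eq_mul]
  have hexp : ∀ N : ℕ, ∫ x, (∑ i ∈ Finset.range N, X i) x ∂P = N * μ := by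
    intro N
    simp only [Finset.sum_apply]
    rw [integral_finset_sum _ (fun i _ => (hmem i).integrable one_le_two)]
    rw [Finset.sum_congr rfl fun i _ => (hident i).integral_eq,
      Finset.sum_const, Finset.card_range, nsmul_eq_mul]
  -- Borel–Cantelli events
  set s : ℕ → Set Ω := fun m =>
    {ω | (((m + 1 : ℕ)) : ℝ) ^ 3 ≤
      |(∑ i ∈ Finset.range ((m + 1) ^ 4), X i) ω -
        ∫ x, (∑ i ∈ Finset.range ((m + 1) ^ 4), X i) x ∂P|} with hsdef
  have hsbound : ∀ m : ℕ, P (s m) ≤ ENNReal.ofReal (V / ((m + 1 : ℕ) : ℝ) ^ 2) := by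
    intro m
    have hcpos : (0:ℝ) < ((m + 1 : ℕ) : ℝ) ^ 3 := by positivity
    have h1 := meas_ge_le_variance_div_sq (μ := P)
      (memLp_finsetSum' (Finset.range ((m + 1) ^ 4)) fun i _ => hmem i) hcpos
    refine h1.trans (ENNReal.ofReal_le_ofReal ?_)
    rw [hvar]
    set x : ℝ := ((m + 1 : ℕ) : ℝ) with hxdef
    have hx1 : (1:ℝ) ≤ x := by rw [hxdef]; exact_mod_cast Nat.le_add_left 1 m
    have hx0 : (0:ℝ) < x := lt_of_lt_of_le zero_lt_one hx1
    have hcast : (((m + 1) ^ 4 : ℕ) : ℝ) = x ^ 4 := by rw [hxdef]; push_cast; ring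
    rw [hcast]
    have : x ^ 4 * V / (x ^ 3) ^ 2 = V / x ^ 2 := by field_simp
    rw [this]
  have hsum : (∑' m, P (s m)) ≠ ⊤ := by
    have hS : Summable (fun m : ℕ => V / ((m + 1 : ℕ) : ℝ) ^ 2) := by
      have h1 : Summable (fun m : ℕ => 1 / ((m : ℝ)) ^ 2) :=
        Real.summable_one_div_nat_pow.2 one_lt_two
      have h2 : Summable (fun m : ℕ => 1 / (((m + 1 : ℕ)) : ℝ) ^ 2) :=
        (summable_nat_add_iff 1).2 h1
      have := h2.mul_left V
      refine this.congr fun m => ?_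
      field_simp
    refine ne_top_of_le_ne_top (b := ENNReal.ofReal (∑' m, V / ((m + 1 : ℕ) : ℝ) ^ 2))
      ENNReal.ofReal_ne_top ?_
    calc (∑' m, P (s m)) ≤ ∑' m, ENNReal.ofReal (V / ((m + 1 : ℕ) : ℝ) ^ 2) :=
      ENNReal.tsum_le_tsum hsbound
    _ = ENNReal.ofReal (∑' m, V / ((m + 1 : ℕ) : ℝ) ^ 2) :=
      (ENNReal.ofReal_tsum_of_nonneg (fun n => div_nonneg hV0 (by positivity)) hS).symm
  have hBC := MeasureTheory.ae_eventually_notMem hsum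
  filter_upwards [hBC, ae_all_iff.2 habs] with ω hev hb
  obtain ⟨M, hM⟩ := eventually_atTop.1 hev
  -- key quantitative estimate along fourth powers
  have key : ∀ j : ℕ, M ≤ j →
      |(1 / ((((j + 1) ^ 4 : ℕ)) : ℝ)) * ∑ i ∈ Finset.range ((j + 1) ^ 4), X i ω - μ|
        < 1 / ((j + 1 : ℕ) : ℝ) := by
    intro j hj
    have hnot := hM j hj
    rw [hsdef] at hnot
    simp only [Set.mem_setOf_eq, not_le] at hnot
    rw [hexp ((j + 1) ^ 4)] at hnot
    simp only [Finset.sum_apply] at hnot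
    set x : ℝ := ((j + 1 : ℕ) : ℝ) with hxdef
    have hx0 : (0:ℝ) < x := by positivity
    have hNcast : ((((j + 1) ^ 4 : ℕ)) : ℝ) = x ^ 4 := by rw [hxdef]; push_cast; ring
    rw [hNcast]
    set S := ∑ i ∈ Finset.range ((j + 1) ^ 4), X i ω with hSdef
    rw [hNcast] at hnot
    have hx40 : (0:ℝ) < x ^ 4 := by positivity
    have heq : 1 / x ^ 4 * S - μ = (S - x ^ 4 * μ) / x ^ 4 := by field_simp
    rw [heq, abs_div, abs_of_pos hx40, div_lt_div_iff₀ hx40 hx0]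
    calc |S - x ^ 4 * μ| * x < x ^ 3 * x := by
          exact mul_lt_mul_of_pos_right hnot hx0
    _ = 1 * x ^ 4 := by ring
  -- restate along all fourth powers
  have key' : ∀ m : ℕ, M + 1 ≤ m →
      |(1 / ((m ^ 4 : ℕ) : ℝ)) * ∑ i ∈ Finset.range (m ^ 4), X i ω - μ| < 1 / (m : ℝ) := by
    intro m hm
    obtain ⟨j, rfl⟩ : ∃ j, m = j + 1 := ⟨m - 1, by omega⟩
    exact key j (by omega)
  -- assemble the modulus
  set C : ℝ := 1 + 30 * c with hCdef
  have hC0 : 0 < C := by positivity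
  set D : ℕ := ⌈C⌉₊ + 1 with hDdef
  have hD1 : 1 ≤ D := Nat.le_add_left 1 _
  have hCD : C < (D : ℝ) := by
    calc C ≤ (⌈C⌉₊ : ℝ) := Nat.le_ceil C
    _ < (D : ℝ) := by exact_mod_cast Nat.lt_succ_self _
  refine ⟨fun n => 16 * (n * D + (M + 2)) ^ 4, primrec_aux D (M + 2), ?_⟩
  intro n hn k hk hfk
  set t : ℕ := n * D + (M + 2) with htdef
  have hfk' : 16 * t ^ 4 ≤ k := hfk
  have ht2 : 2 ≤ t := by omega
  set m : ℕ := Nat.sqrt (Nat.sqrt k) with hmdef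
  have hm4 : m ^ 4 ≤ k := by
    calc m ^ 4 = (m ^ 2) ^ 2 := by ring
    _ ≤ (Nat.sqrt k) ^ 2 := Nat.pow_le_pow_left (Nat.sqrt_le' _) 2
    _ ≤ k := Nat.sqrt_le' _
  have hk4 : k < (m + 1) ^ 4 := by
    have h1 : Nat.sqrt k < (m + 1) ^ 2 := Nat.lt_succ_sqrt' _
    calc k < (Nat.sqrt k + 1) ^ 2 := Nat.lt_succ_sqrt' _
    _ ≤ ((m + 1) ^ 2) ^ 2 := Nat.pow_le_pow_left h1 2
    _ = (m + 1) ^ 4 := by ring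
  have hmt : 2 * t ≤ m := by
    by_contra hcon
    push_neg at hcon
    have h17 : (m + 1) ^ 4 ≤ (2 * t) ^ 4 := Nat.pow_le_pow_left (by omega) 4
    have h16 : (2 * t) ^ 4 = 16 * t ^ 4 := by ring
    omega
  have hm1 : 1 ≤ m := by omega
  have hMm : M + 1 ≤ m := by omega
  have hkey := key' m hMm
  have hinterp := interp_aux (fun i => X i ω) c hc0 hb m k hm1 hm4 hk4
  have hm0r : (0:ℝ) < (m : ℝ) := by exact_mod_cast lt_of_lt_of_le one_pos hm1
  have hn0r : (0:ℝ) < (n : ℝ) := by exact_mod_cast hn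
  calc |(1 / (k : ℝ)) * ∑ i ∈ Finset.range k, X i ω - μ|
      ≤ |(1 / (k : ℝ)) * ∑ i ∈ Finset.range k, X i ω -
          (1 / ((m ^ 4 : ℕ) : ℝ)) * ∑ i ∈ Finset.range (m ^ 4), X i ω| +
        |(1 / ((m ^ 4 : ℕ) : ℝ)) * ∑ i ∈ Finset.range (m ^ 4), X i ω - μ| :=
      abs_sub_le _ _ _
    _ < 30 * c / (m : ℝ) + 1 / (m : ℝ) := add_lt_add_of_le_of_lt hinterp hkey
    _ = C / (m : ℝ) := by rw [hCdef]; field_simp; ring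
    _ < 1 / (n : ℝ) := by
        rw [div_lt_div_iff₀ hm0r hn0r, one_mul]
        have h1 : (n : ℝ) * C < (n : ℝ) * D := mul_lt_mul_of_pos_left hCD hn0r
        have h2 : (n : ℝ) * (D : ℝ) ≤ (m : ℝ) := by
          have : n * D ≤ m := by omega
          exact_mod_cast this
        linarith
end
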